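/- If two permutations σ, τ ∈ S_n map to the same binary tree under the projection Ψ (forgetting labels of the increasing binary tree of the permutation), then σ and τ have the same Up-Down sequence, i.e., for every i with 1 ≤ i ≤ n−1, σ(i+1) > σ(i) if and only if τ(i+1) > τ(i). -/

import Mathlib

/-- Auxiliary recursion (on a fuel bounding the length): the unlabeled binary tree of a
word of distinct integers, obtained by putting the position of the minimum at the root,
with left subtree built from the prefix before the minimum and right subtree from the
suffix after it. -/
def shapeOfAux : ℕ → List ℕ → Tree Unit
  | 0, _ => Tree.nil
  | fuel + 1, l =>
    if l = [] then Tree.nil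
    else
      let m := l.min?.getD 0
      let i := l.idxOf m
      Tree.node () (shapeOfAux fuel (l.take i)) (shapeOfAux fuel (l.drop (i + 1)))

/-- The unlabeled binary tree underlying the increasing binary tree of a word. -/
def shapeOfList (l : List ℕ) : Tree Unit := shapeOfAux l.length l

/-- `Ψ : S_n → Y_n` sends a permutation to the underlying unlabeled binary tree of its
increasing binary tree. -/
def Psi {n : ℕ} (σ : Equiv.Perm (Fin n)) : Tree Unit :=
  shapeOfList (List.ofFn fun i => (σ i : ℕ))

lemma min?_spec (l : List ℕ) (a : ℕ) (h : l.min? = some a) : a ∈ l ∧ ∀ b ∈ l, a ≤ b := by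
  rw [List.min?_eq_some_iff] at h
  · exact h

lemma minIdx_lt (l : List ℕ) (hl : l ≠ []) :
    l.idxOf (l.min?.getD 0) < l.length := by
  obtain ⟨m, hm⟩ := Option.ne_none_iff_exists'.mp (List.min?_eq_none_iff.not.mpr hl)
  have hmem := (min?_spec l m hm).1
  rw [hm]
  simpa using List.idxOf_lt_length_iff.mpr hmem

lemma shapeOfAux_congr : ∀ f₁ f₂ (l : List ℕ), l.length ≤ f₁ → l.length ≤ f₂ →
    shapeOfAux f₁ l = shapeOfAux f₂ l := by
  intro f₁
  induction f₁ with
  | zero =>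
    intro f₂ l h1 h2
    have : l = [] := List.length_eq_zero_iff.mp (Nat.le_zero.mp h1)
    subst this
    cases f₂ <;> simp [shapeOfAux]
  | succ f ih =>
    intro f₂ l h1 h2
    cases f₂ with
    | zero =>
      have : l = [] := List.length_eq_zero_iff.mp (Nat.le_zero.mp h2)
      subst this; simp [shapeOfAux]
    | succ g =>
      by_cases hl : l = []
      · subst hl; simp [shapeOfAux]
      · have hi := minIdx_lt l hl
        simp only [shapeOfAux, if_neg hl]
        congr 1
        · exact ih g _ (by simp; omega) (by simp; omega)
        · exact ih g _ (by simp; omega) (by simp; omega)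

lemma shapeOfAux_eq (f : ℕ) (l : List ℕ) (h : l.length ≤ f) :
    shapeOfAux f l = shapeOfList l :=
  shapeOfAux_congr f l.length l h le_rfl

lemma shapeOfList_unfold (l : List ℕ) (hl : l ≠ []) :
    shapeOfList l =
      Tree.node () (shapeOfList (l.take (l.idxOf (l.min?.getD 0))))
        (shapeOfList (l.drop (l.idxOf (l.min?.getD 0) + 1))) := by
  have hi := minIdx_lt l hl
  have hlen : l.length ≠ 0 := by simpa using List.length_pos_iff.mpr hl |>.ne'
  obtain ⟨k, hk⟩ : ∃ k, l.length = k + 1 := ⟨l.length - 1, by omega⟩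
  rw [shapeOfList, hk]
  simp only [shapeOfAux, if_neg hl]
  congr 1
  · exact shapeOfAux_eq _ _ (by simp; omega)
  · exact shapeOfAux_eq _ _ (by simp; omega)

lemma numNodes_shapeOfList : ∀ N (l : List ℕ), l.length ≤ N →
    (shapeOfList l).numNodes = l.length := by
  intro N
  induction N with
  | zero =>
    intro l h
    have : l = [] := List.length_eq_zero_iff.mp (Nat.le_zero.mp h)
    subst this; simp [shapeOfList, shapeOfAux, Tree.numNodes]
  | succ N ih =>
    intro l h
    by_cases hl : l = []
    · subst hl; simp [shapeOfList, shapeOfAux, Tree.numNodes]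
    · have hi := minIdx_lt l hl
      rw [shapeOfList_unfold l hl]
      simp only [Tree.numNodes, Tree.node, BinaryTree.numNodes] at ih ⊢
      rw [ih _ (by simp; omega), ih _ (by simp; omega)]
      simp; omega

lemma key : ∀ N (l₁ l₂ : List ℕ), l₁.length ≤ N → l₁.Nodup → l₂.Nodup →
    l₁.length = l₂.length → shapeOfList l₁ = shapeOfList l₂ →
    ∀ j, (hj : j + 1 < l₁.length) → (hj' : j + 1 < l₂.length) →
      (l₁[j] < l₁[j+1] ↔ l₂[j] < l₂[j+1]) := by
  intro N
  induction N with
  | zero =>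
    intro l₁ l₂ h _ _ _ _ j hj _
    omega
  | succ N ih =>
    intro l₁ l₂ hN hn1 hn2 hlen hsh j hj hj'
    have hl1 : l₁ ≠ [] := by intro h; subst h; simp at hj
    have hl2 : l₂ ≠ [] := by intro h; subst h; simp at hj'
    -- mins
    obtain ⟨m₁, hm₁⟩ := Option.ne_none_iff_exists'.mp (List.min?_eq_none_iff.not.mpr hl1)
    obtain ⟨m₂, hm₂⟩ := Option.ne_none_iff_exists'.mp (List.min?_eq_none_iff.not.mpr hl2)
    obtain ⟨hm₁mem, hm₁le⟩ := min?_spec _ _ hm₁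
    obtain ⟨hm₂mem, hm₂le⟩ := min?_spec _ _ hm₂
    set i₁ := l₁.idxOf (l₁.min?.getD 0) with hi₁def
    set i₂ := l₂.idxOf (l₂.min?.getD 0) with hi₂def
    have hgd₁ : l₁.min?.getD 0 = m₁ := by rw [hm₁]; rfl
    have hgd₂ : l₂.min?.getD 0 = m₂ := by rw [hm₂]; rfl
    have hi₁ : i₁ < l₁.length := minIdx_lt l₁ hl1
    have hi₂ : i₂ < l₂.length := minIdx_lt l₂ hl2
    have hget₁ : l₁[i₁] = m₁ := by
      simp only [hi₁def, hgd₁]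
      exact List.getElem_idxOf (List.idxOf_lt_length_iff.mpr hm₁mem)
    have hget₂ : l₂[i₂] = m₂ := by
      simp only [hi₂def, hgd₂]
      exact List.getElem_idxOf (List.idxOf_lt_length_iff.mpr hm₂mem)
    rw [shapeOfList_unfold l₁ hl1, shapeOfList_unfold l₂ hl2] at hsh
    simp only [Tree.node, BinaryTree.node.injEq] at hsh
    obtain ⟨-, hL, hR⟩ := hsh
    rw [← hi₁def] at hL hR
    rw [← hi₂def] at hL hR
    clear_value i₁ i₂
    -- equal min positions
    have hii : i₁ = i₂ := by
      have := congrArg Tree.numNodes hL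
      rw [numNodes_shapeOfList N _ (by simp; omega),
        numNodes_shapeOfList N _ (by simp; omega)] at this
      simpa [Nat.min_eq_left (le_of_lt hi₁), Nat.min_eq_left (le_of_lt hi₂)] using this
    subst hii
    -- min is strict min at other positions
    have hstrict₁ : ∀ k (hk : k < l₁.length), k ≠ i₁ → m₁ < l₁[k] := by
      intro k hk hki
      have hle := hm₁le _ (l₁.getElem_mem hk)
      rcases lt_or_eq_of_le hle with h | h
      · exact h
      · exfalso; apply hki
        have : l₁[k] = l₁[i₁] := by rw [hget₁, h]
        exact (hn1.getElem_inj_iff.mp this)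
    have hstrict₂ : ∀ k (hk : k < l₂.length), k ≠ i₁ → m₂ < l₂[k] := by
      intro k hk hki
      have hle := hm₂le _ (l₂.getElem_mem hk)
      rcases lt_or_eq_of_le hle with h | h
      · exact h
      · exfalso; apply hki
        have : l₂[k] = l₂[i₁] := by rw [hget₂, h]
        exact (hn2.getElem_inj_iff.mp this)
    rcases lt_trichotomy (j + 1) i₁ with hc | hc | hc
    · -- both in prefix
      have := ih (l₁.take i₁) (l₂.take i₁)
        (by simp; omega) (hn1.sublist (List.take_sublist _ _)) (hn2.sublist (List.take_sublist _ _))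
        (by simp; omega) hL j (by simp; omega) (by simp; omega)
      simpa [List.getElem_take] using this
    · -- j+1 = i₁ : descent on both sides
      have h1 : l₁[j+1] = m₁ := by simp only [hc]; exact hget₁
      have h2 : l₂[j+1] = m₂ := by simp only [hc]; exact hget₂
      have h3 := hstrict₁ j (by omega) (by omega)
      have h4 := hstrict₂ j (by omega) (by omega)
      constructor
      · intro hlt; omega
      · intro hlt; omega
    · rcases Nat.lt_or_ge i₁ j with hc2 | hc2
      swap
      · -- j = i₁ : ascent both
        have hji : j = i₁ := by omega
        have h1 : l₂[j] = m₂ := by simp only [hji]; exact hget₂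
        have h2 : l₁[j] = m₁ := by simp only [hji]; exact hget₁
        have h3 := hstrict₂ (j+1) (by omega) (by omega)
        have h4 := hstrict₁ (j+1) (by omega) (by omega)
        constructor
        · intro _; omega
        · intro _; omega
      · -- both in suffix
        have ha1 : (l₁.drop (i₁+1)).length ≤ N := by simp only [List.length_drop]; omega
        have ha2 : (l₁.drop (i₁+1)).length = (l₂.drop (i₁+1)).length := by
          simp only [List.length_drop]; omega
        have ha3 : j - (i₁+1) + 1 < (l₁.drop (i₁+1)).length := by
          simp only [List.length_drop]; omega
        have ha4 : j - (i₁+1) + 1 < (l₂.drop (i₁+1)).length := by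
          simp only [List.length_drop]; omega
        have hd := ih (l₁.drop (i₁+1)) (l₂.drop (i₁+1))
          ha1 (hn1.sublist (List.drop_sublist _ _)) (hn2.sublist (List.drop_sublist _ _))
          ha2 hR (j - (i₁+1)) ha3 ha4
        have e1 : i₁ + 1 + (j - (i₁ + 1)) = j := by omega
        have e2 : i₁ + 1 + (j - (i₁ + 1) + 1) = j + 1 := by omega
        rw [List.getElem_drop, List.getElem_drop, List.getElem_drop, List.getElem_drop] at hd
        simp only [e1, e2] at hd
        exact hd

/-- If two permutations `σ, τ ∈ S_n` project to the same binary tree under `Ψ`, then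
they have the same Up-Down sequence: for all `1 ≤ i ≤ n-1`,
`σ(i+1) > σ(i) ↔ τ(i+1) > τ(i)`. -/
theorem updown_eq_of_psi_eq {n : ℕ} (σ τ : Equiv.Perm (Fin n)) (h : Psi σ = Psi τ) :
    ∀ i : ℕ, (hi : i + 1 < n) →
      (σ ⟨i, Nat.lt_of_succ_lt hi⟩ < σ ⟨i + 1, hi⟩ ↔
        τ ⟨i, Nat.lt_of_succ_lt hi⟩ < τ ⟨i + 1, hi⟩) := by
  intro i hi
  have hn1 : (List.ofFn fun i => ((σ i : ℕ))).Nodup :=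
    List.nodup_ofFn.mpr (fun a b hab => σ.injective (Fin.val_injective hab))
  have hn2 : (List.ofFn fun i => ((τ i : ℕ))).Nodup :=
    List.nodup_ofFn.mpr (fun a b hab => τ.injective (Fin.val_injective hab))
  have := key n _ _ (by simp) hn1 hn2 (by simp) h i (by simpa) (by simpa)
  simp only [List.getElem_ofFn] at this
  exact Iff.trans Fin.lt_def (this.trans Fin.lt_def.symm)
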